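/- arXiv:1804.11320 — 2 statements merged into one kernel-verified Lean document; each statement's English description precedes it below -/
import Mathlib

section
/- Let F : ℝⁿ → H(m) be continuously differentiable (into Hermitian matrices), f(x) = λ₁(F(x)), φ(y, x) = λ₁(F(x) + F'(x)(y − x)). Then φ is a strict first-order model: for all sequences xₖ → x and yₖ → x there exist εₖ → 0⁺ with f(yₖ) ≤ φ(yₖ, xₖ) + εₖ‖yₖ − xₖ‖. -/
attribute [local instance] Matrix.normedAddCommGroup Matrix.normedSpace

/-- The largest (supremum of) real eigenvalue(s) of a complex matrix. -/
noncomputable def lambdaMax {m : ℕ} (M : Matrix (Fin m) (Fin m) ℂ) : ℝ :=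
  sSup {r : ℝ | ∃ w : Fin m → ℂ, w ≠ 0 ∧ M.mulVec w = (r : ℂ) • w}


open Matrix in
lemma eigen_abs_le {m : ℕ} {M : Matrix (Fin m) (Fin m) ℂ} {r : ℝ} {w : Fin m → ℂ}
    (hw : w ≠ 0) (h : M.mulVec w = (r : ℂ) • w) : |r| ≤ m * ‖M‖ := by
  have hwpos : 0 < ‖w‖ := norm_pos_iff.mpr hw
  have h2 : ‖M.mulVec w‖ ≤ (m : ℝ) * ‖M‖ * ‖w‖ := by
    apply pi_norm_le_iff_of_nonneg (by positivity) |>.mpr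
    intro i
    calc ‖∑ j, M i j * w j‖ ≤ ∑ j, ‖M i j * w j‖ := norm_sum_le _ _
      _ ≤ ∑ _j : Fin m, ‖M‖ * ‖w‖ := by
          apply Finset.sum_le_sum
          intro j _
          rw [norm_mul]
          exact mul_le_mul (M.norm_entry_le_entrywise_sup_norm) (norm_le_pi_norm w j)
            (norm_nonneg _) (norm_nonneg _)
      _ = (m : ℝ) * ‖M‖ * ‖w‖ := by simp [Finset.sum_const]; ring
  have h1 : |r| * ‖w‖ = ‖M.mulVec w‖ := by
    rw [h, norm_smul]
    simp
  have := h1 ▸ h2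
  exact le_of_mul_le_mul_right this hwpos

open Matrix in
lemma lm_bddAbove {m : ℕ} (M : Matrix (Fin m) (Fin m) ℂ) :
    BddAbove {r : ℝ | ∃ w : Fin m → ℂ, w ≠ 0 ∧ M.mulVec w = (r : ℂ) • w} :=
  ⟨m * ‖M‖, fun r ⟨w, hw, h⟩ => (abs_le.mp (eigen_abs_le hw h)).2⟩

open Matrix in
lemma lm_eigen_mem {m : ℕ} {A : Matrix (Fin m) (Fin m) ℂ} (hA : A.IsHermitian) (j : Fin m) :
    hA.eigenvalues j ∈ {r : ℝ | ∃ w : Fin m → ℂ, w ≠ 0 ∧ A.mulVec w = (r : ℂ) • w} := by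
  refine ⟨(WithLp.equiv 2 _) (hA.eigenvectorBasis j), ?_, ?_⟩
  · simpa using hA.eigenvectorBasis.orthonormal.ne_zero j
  · rw [WithLp.equiv_apply, hA.mulVec_eigenvectorBasis j, RCLike.real_smul_eq_coe_smul (K := ℂ)]; rfl

open Matrix in
lemma lm_eigen_le {m : ℕ} {A : Matrix (Fin m) (Fin m) ℂ} (hA : A.IsHermitian) (j : Fin m) :
    hA.eigenvalues j ≤ lambdaMax A :=
  le_csSup (lm_bddAbove A) (lm_eigen_mem hA j)

open Matrix in
lemma rayleigh_le {m : ℕ} {B : Matrix (Fin m) (Fin m) ℂ} (hB : B.IsHermitian)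
    (u : EuclideanSpace ℂ (Fin m)) (hu : ‖u‖ = 1) :
    (inner ℂ u (Matrix.toEuclideanLin B u) : ℂ).re ≤ lambdaMax B := by
  set b := hB.eigenvectorBasis with hb
  set c : Fin m → ℂ := fun j => b.repr u j with hc
  have hsum : ∑ j, ‖c j‖ ^ 2 = 1 := by
    have h1 : ‖b.repr u‖ = 1 := by rw [LinearIsometryEquiv.norm_map]; exact hu
    have h2 := EuclideanSpace.norm_eq (b.repr u)
    rw [h1] at h2
    exact Real.sqrt_eq_one.mp h2.symm
  have hrepr : ∑ j, c j • b j = u := b.sum_repr u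
  have hTb : ∀ j, Matrix.toEuclideanLin B (b j) = ((hB.eigenvalues j : ℝ) : ℂ) • b j := by
    intro j
    apply (WithLp.equiv 2 _).injective
    simp only [WithLp.equiv_apply]
    rw [Matrix.ofLp_toEuclideanLin_apply, WithLp.ofLp_smul,
      hB.mulVec_eigenvectorBasis j, RCLike.real_smul_eq_coe_smul (K := ℂ)]
    rfl
  have hTu : Matrix.toEuclideanLin B u = ∑ j, (c j * (hB.eigenvalues j : ℂ)) • b j := by
    conv_lhs => rw [← hrepr]
    rw [map_sum]
    refine Finset.sum_congr rfl fun j _ => ?_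
    rw [_root_.map_smul, hTb, smul_smul]
  have hib : ∀ j, (inner ℂ u (b j) : ℂ) = starRingEnd ℂ (c j) := by
    intro j
    rw [hc]
    dsimp only
    rw [b.repr_apply_apply, inner_conj_symm]
  have hinner : (inner ℂ u (Matrix.toEuclideanLin B u) : ℂ).re
      = ∑ j, hB.eigenvalues j * ‖c j‖ ^ 2 := by
    rw [hTu, inner_sum]
    simp only [inner_smul_right, hib]
    rw [Complex.re_sum]
    refine Finset.sum_congr rfl fun j _ => ?_
    have : c j * (hB.eigenvalues j : ℂ) * starRingEnd ℂ (c j)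
        = ((hB.eigenvalues j * ‖c j‖ ^ 2 : ℝ) : ℂ) := by
      rw [mul_comm (c j), mul_assoc, RCLike.mul_conj]
      norm_num
    rw [this, Complex.ofReal_re]
  rw [hinner]
  calc ∑ j, hB.eigenvalues j * ‖c j‖ ^ 2 ≤ ∑ j, lambdaMax B * ‖c j‖ ^ 2 :=
        Finset.sum_le_sum fun j _ =>
          mul_le_mul_of_nonneg_right (lm_eigen_le hB j) (sq_nonneg _)
    _ = lambdaMax B := by rw [← Finset.mul_sum, hsum, mul_one]

open Matrix in
/-- bound on the quadratic form of an arbitrary matrix. -/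
lemma inner_matrix_le {m : ℕ} (C : Matrix (Fin m) (Fin m) ℂ)
    (u : EuclideanSpace ℂ (Fin m)) (hu : ‖u‖ = 1) :
    ‖(inner ℂ u (Matrix.toEuclideanLin C u) : ℂ)‖ ≤ m * ‖C‖ := by
  have hsum : ∑ i, ‖u i‖ ^ 2 = 1 := by
    have h2 := EuclideanSpace.norm_eq u
    rw [hu] at h2
    exact Real.sqrt_eq_one.mp h2.symm
  have hinner : (inner ℂ u (Matrix.toEuclideanLin C u) : ℂ)
      = ∑ i, starRingEnd ℂ (u i) * ∑ j, C i j * u j := by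
    rw [PiLp.inner_apply]
    refine Finset.sum_congr rfl fun i _ => ?_
    rw [RCLike.inner_apply, mul_comm]
    rfl
  rw [hinner]
  calc ‖∑ i, starRingEnd ℂ (u i) * ∑ j, C i j * u j‖
      ≤ ∑ i, ‖starRingEnd ℂ (u i) * ∑ j, C i j * u j‖ := norm_sum_le _ _
    _ ≤ ∑ i, ‖u i‖ * ∑ j, ‖C‖ * ‖u j‖ := by
        refine Finset.sum_le_sum fun i _ => ?_
        rw [norm_mul, RCLike.norm_conj]
        refine mul_le_mul_of_nonneg_left ?_ (norm_nonneg _)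
        refine (norm_sum_le _ _).trans (Finset.sum_le_sum fun j _ => ?_)
        rw [norm_mul]
        exact mul_le_mul_of_nonneg_right (C.norm_entry_le_entrywise_sup_norm) (norm_nonneg _)
    _ = ‖C‖ * (∑ i, ‖u i‖) ^ 2 := by
        rw [sq, Finset.sum_mul_sum]
        rw [Finset.mul_sum]
        refine Finset.sum_congr rfl fun i _ => ?_
        rw [Finset.mul_sum, Finset.mul_sum]
        refine Finset.sum_congr rfl fun j _ => ?_
        ring
    _ ≤ ‖C‖ * (m * ∑ i, ‖u i‖ ^ 2) := by
        refine mul_le_mul_of_nonneg_left ?_ (norm_nonneg _)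
        simpa using sq_sum_le_card_mul_sum_sq (s := Finset.univ) (f := fun i => ‖u i‖)
    _ = m * ‖C‖ := by rw [hsum]; ring

open Matrix in
lemma lambdaMax_le {m : ℕ} {A B : Matrix (Fin m) (Fin m) ℂ}
    (hA : A.IsHermitian) (hB : B.IsHermitian) :
    lambdaMax A ≤ lambdaMax B + m * ‖A - B‖ := by
  rcases Nat.eq_zero_or_pos m with hm | hm
  · subst hm
    have he : ∀ (M : Matrix (Fin 0) (Fin 0) ℂ),
        {r : ℝ | ∃ w : Fin 0 → ℂ, w ≠ 0 ∧ M.mulVec w = (r : ℂ) • w} = ∅ := by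
      intro M
      ext r
      simp only [Set.mem_setOf_eq, Set.mem_empty_iff_false, iff_false, not_exists]
      intro w ⟨hw, _⟩
      exact hw (funext fun i => absurd i.2 (by omega))
    unfold lambdaMax
    rw [he A, he B, Real.sSup_empty]
    positivity
  · have hne : {r : ℝ | ∃ w : Fin m → ℂ, w ≠ 0 ∧ A.mulVec w = (r : ℂ) • w}.Nonempty :=
      ⟨hA.eigenvalues ⟨0, hm⟩, lm_eigen_mem hA ⟨0, hm⟩⟩
    refine csSup_le hne ?_
    rintro r ⟨w, hw, hr⟩
    -- normalize
    set w' : EuclideanSpace ℂ (Fin m) := (WithLp.equiv 2 _).symm w with hw'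
    have hwn : ‖w'‖ ≠ 0 := by
      simp only [ne_eq, norm_eq_zero]
      intro h0
      exact hw (congrArg (WithLp.equiv 2 _) h0)
    set u : EuclideanSpace ℂ (Fin m) := ((‖w'‖ : ℂ))⁻¹ • w' with hu'
    have hu : ‖u‖ = 1 := by
      rw [hu', norm_smul, norm_inv, Complex.norm_real, Real.norm_eq_abs,
        abs_of_nonneg (norm_nonneg _)]
      field_simp
    have hAu : Matrix.toEuclideanLin A u = ((r : ℝ) : ℂ) • u := by
      apply (WithLp.equiv 2 _).injective
      simp only [WithLp.equiv_apply]
      rw [Matrix.ofLp_toEuclideanLin_apply, WithLp.ofLp_smul, hu', WithLp.ofLp_smul]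
      rw [show WithLp.ofLp w' = w from rfl]
      rw [Matrix.mulVec_smul, hr, smul_comm]
      rfl
    have hr' : r = (inner ℂ u (Matrix.toEuclideanLin A u) : ℂ).re := by
      rw [hAu, inner_smul_right, inner_self_eq_norm_sq_to_K, hu]
      norm_num
    have hABA : B + (A - B) = A := by abel
    have hsplit : Matrix.toEuclideanLin A u
        = Matrix.toEuclideanLin B u + Matrix.toEuclideanLin (A - B) u := by
      conv_lhs => rw [← hABA]
      rw [map_add, LinearMap.add_apply]
    rw [hr', hsplit, inner_add_right, Complex.add_re]
    have h1 := rayleigh_le hB u hu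
    have h2 : (inner ℂ u (Matrix.toEuclideanLin (A - B) u) : ℂ).re ≤ (m : ℝ) * ‖A - B‖ :=
      (Complex.re_le_norm _).trans (inner_matrix_le (A - B) u hu)
    linarith

open Matrix in
lemma isHermitian_isClosed {m : ℕ} :
    IsClosed {A : Matrix (Fin m) (Fin m) ℂ | A.IsHermitian} := by
  exact isClosed_eq continuous_id.matrix_conjTranspose continuous_id

open Matrix in
lemma fderiv_isHermitian {n m : ℕ}
    {F : EuclideanSpace ℝ (Fin n) → Matrix (Fin m) (Fin m) ℂ}
    {F' : EuclideanSpace ℝ (Fin n) →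
      (EuclideanSpace ℝ (Fin n) →L[ℝ] Matrix (Fin m) (Fin m) ℂ)}
    (hderiv : ∀ x, HasFDerivAt F (F' x) x)
    (hherm : ∀ x, (F x).IsHermitian)
    (x v : EuclideanSpace ℝ (Fin n)) : (F' x v).IsHermitian := by
  have hcurve : HasDerivAt (fun t : ℝ => F (x + t • v)) (F' x v) 0 := by
    have h1 : HasDerivAt (fun t : ℝ => x + t • v) v 0 := by
      simpa using ((hasDerivAt_id (0 : ℝ)).smul_const v).const_add x
    have := (hderiv x).comp_hasDerivAt_of_eq 0 h1 (by simp)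
    exact this
  have hslope := hasDerivAt_iff_tendsto_slope.mp hcurve
  refine isHermitian_isClosed.mem_of_tendsto hslope ?_
  filter_upwards [self_mem_nhdsWithin] with t ht
  have : slope (fun t : ℝ => F (x + t • v)) 0 t
      = (t - 0)⁻¹ • (F (x + t • v) - F (x + (0:ℝ) • v)) := by
    rw [slope_def_module]
  rw [this]
  show ((t - 0)⁻¹ • (F (x + t • v) - F (x + (0:ℝ) • v))).IsHermitian
  unfold Matrix.IsHermitian
  rw [Matrix.conjTranspose_smul, star_trivial, ((hherm _).sub (hherm _))]

/-- Strictness of the eigenvalue model: for C¹ Hermitian-valued F, with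
f(x) = λ₁(F(x)) and φ(y,x) = λ₁(F(x) + F'(x)(y-x)), for all sequences
xₖ → x, yₖ → x there exist εₖ → 0⁺ with
f(yₖ) ≤ φ(yₖ, xₖ) + εₖ‖yₖ − xₖ‖. -/
theorem stmt10 (n m : ℕ)
    (F : EuclideanSpace ℝ (Fin n) → Matrix (Fin m) (Fin m) ℂ)
    (F' : EuclideanSpace ℝ (Fin n) →
      (EuclideanSpace ℝ (Fin n) →L[ℝ] Matrix (Fin m) (Fin m) ℂ))
    (hderiv : ∀ x, HasFDerivAt F (F' x) x)
    (hcont : Continuous F')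
    (hherm : ∀ x, (F x).IsHermitian)
    (f : EuclideanSpace ℝ (Fin n) → ℝ) (hf : ∀ x, f x = lambdaMax (F x))
    (φ : EuclideanSpace ℝ (Fin n) → EuclideanSpace ℝ (Fin n) → ℝ)
    (hφ : ∀ y x, φ y x = lambdaMax (F x + F' x (y - x)))
    (x : EuclideanSpace ℝ (Fin n)) (xs ys : ℕ → EuclideanSpace ℝ (Fin n))
    (hx : Filter.Tendsto xs Filter.atTop (nhds x))
    (hy : Filter.Tendsto ys Filter.atTop (nhds x)) :
    ∃ ε : ℕ → ℝ, Filter.Tendsto ε Filter.atTop (nhds 0) ∧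
      ∀ k, 0 ≤ ε k ∧ f (ys k) ≤ φ (ys k) (xs k) + ε k * ‖ys k - xs k‖ := by
  classical
  set R : ℕ → Matrix (Fin m) (Fin m) ℂ :=
    fun k => F (ys k) - F (xs k) - F' (xs k) (ys k - xs k) with hR
  set g : ℕ → ℝ := fun k => ‖R k‖ / ‖ys k - xs k‖ with hg
  have hgnonneg : ∀ k, 0 ≤ g k := fun k => div_nonneg (norm_nonneg _) (norm_nonneg _)
  have hMk : ∀ k, (F (xs k) + F' (xs k) (ys k - xs k)).IsHermitian := fun k =>
    (hherm _).add (fderiv_isHermitian hderiv hherm _ _)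
  have hkey : ∀ k, f (ys k) ≤ φ (ys k) (xs k) + m * ‖R k‖ := by
    intro k
    rw [hf, hφ]
    have h1 := lambdaMax_le (hherm (ys k)) (hMk k)
    have hdiff : F (ys k) - (F (xs k) + F' (xs k) (ys k - xs k)) = R k := by rw [hR]; abel
    rwa [hdiff] at h1
  have hRnorm : ∀ k, (m : ℝ) * ‖R k‖ = (m * g k) * ‖ys k - xs k‖ := by
    intro k
    by_cases h : ys k = xs k
    · have hR0 : R k = 0 := by rw [hR]; simp [h]
      simp [hg, hR0]
    · have hne : ‖ys k - xs k‖ ≠ 0 := by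
        simpa [sub_eq_zero] using h
      rw [hg]
      field_simp
  refine ⟨fun k => m * g k, ?_, ?_⟩
  · have hgt : Filter.Tendsto g Filter.atTop (nhds 0) := by
      rw [Metric.tendsto_atTop]
      intro δ hδ
      letI : SeminormedAddCommGroup (EuclideanSpace ℝ (Fin n) →L[ℝ] Matrix (Fin m) (Fin m) ℂ) :=
        ContinuousLinearMap.toSeminormedAddCommGroup (σ₁₂ := RingHom.id ℝ)
      obtain ⟨δ', hδ', hF'⟩ := (Metric.continuousAt_iff (f := F') (a := x)).mp (by exact hcont.continuousAt)
        (δ / 4) (by linarith)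
      obtain ⟨N1, hN1⟩ := (Metric.tendsto_atTop.mp hx) δ' hδ'
      obtain ⟨N2, hN2⟩ := (Metric.tendsto_atTop.mp hy) δ' hδ'
      refine ⟨max N1 N2, fun k hk => ?_⟩
      have hxk := hN1 k (le_trans (le_max_left _ _) hk)
      have hyk := hN2 k (le_trans (le_max_right _ _) hk)
      have hball : segment ℝ (xs k) (ys k) ⊆ Metric.ball x δ' :=
        (convex_ball x δ').segment_subset (Metric.mem_ball.mpr hxk) (Metric.mem_ball.mpr hyk)
      have hbound : ∀ z ∈ segment ℝ (xs k) (ys k), ‖F' z - F' (xs k)‖ ≤ δ / 2 := by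
        intro z hz
        have h1 : dist (F' z) (F' x) < δ / 4 := hF' (Metric.mem_ball.mp (hball hz))
        have h2 : dist (F' (xs k)) (F' x) < δ / 4 := hF' hxk
        calc ‖F' z - F' (xs k)‖ = dist (F' z) (F' (xs k)) := (dist_eq_norm _ _).symm
          _ ≤ dist (F' z) (F' x) + dist (F' x) (F' (xs k)) := dist_triangle _ _ _
          _ ≤ δ / 4 + δ / 4 := by rw [dist_comm (F' x)]; linarith
          _ = δ / 2 := by ring
      have hmvt := Convex.norm_image_sub_le_of_norm_hasFDerivWithin_le'
        (f := F) (f' := F') (φ := F' (xs k)) (s := segment ℝ (xs k) (ys k))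
        (fun z _ => (hderiv z).hasFDerivWithinAt) hbound (convex_segment _ _)
        (left_mem_segment ℝ _ _) (right_mem_segment ℝ _ _)
      have hgk : g k ≤ δ / 2 := by
        rw [hg]
        by_cases h : ‖ys k - xs k‖ = 0
        · simp [h]
          positivity
        · rw [div_le_iff₀ (lt_of_le_of_ne (norm_nonneg _) (Ne.symm h))]
          exact hmvt
      rw [Real.dist_eq, sub_zero, abs_of_nonneg (hgnonneg k)]
      linarith
    have := hgt.const_mul (m : ℝ)
    simpa using this
  · intro k
    refine ⟨by positivity, ?_⟩
    calc f (ys k) ≤ φ (ys k) (xs k) + m * ‖R k‖ := hkey k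
      _ = φ (ys k) (xs k) + (m * g k) * ‖ys k - xs k‖ := by rw [hRnorm k]
end

section
/- Let φ, (φₖ) be convex functions on ℝⁿ with φₖ ≤ φ, and suppose for each k that gₖ is a subgradient of φₖ₊₁ at yᵏ with φₖ₊₁(yᵏ) = φ(yᵏ). If the gₖ are bounded, yᵏ⁺¹ − yᵏ → 0, and φₖ₊₁(yᵏ⁺¹) − φₖ(yᵏ) → 0, then φ(yᵏ) − φₖ(yᵏ) → 0. -/
/-- Cutting-plane exactness in the limit: if φₖ ≤ φ are convex, gₖ is a
subgradient of φₖ₊₁ at yᵏ with φₖ₊₁(yᵏ) = φ(yᵏ), the gₖ are bounded,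
yᵏ⁺¹ - yᵏ → 0 and φₖ₊₁(yᵏ⁺¹) - φₖ(yᵏ) → 0, then φ(yᵏ) - φₖ(yᵏ) → 0. -/
theorem stmt15 (n : ℕ) (φ : EuclideanSpace ℝ (Fin n) → ℝ)
    (hφ : ConvexOn ℝ Set.univ φ)
    (φk : ℕ → EuclideanSpace ℝ (Fin n) → ℝ)
    (hφkconv : ∀ k, ConvexOn ℝ Set.univ (φk k))
    (hφkle : ∀ k y, φk k y ≤ φ y)
    (y g : ℕ → EuclideanSpace ℝ (Fin n))
    (hsub : ∀ k (h : EuclideanSpace ℝ (Fin n)),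
      (inner ℝ (g k) h : ℝ) ≤ φk (k + 1) (y k + h) - φk (k + 1) (y k))
    (hexact : ∀ k, φk (k + 1) (y k) = φ (y k))
    (hgbdd : ∃ Cg : ℝ, ∀ k, ‖g k‖ ≤ Cg)
    (hydiff : Filter.Tendsto (fun k => y (k + 1) - y k) Filter.atTop (nhds 0))
    (hval : Filter.Tendsto (fun k => φk (k + 1) (y (k + 1)) - φk k (y k))
      Filter.atTop (nhds 0)) :
    Filter.Tendsto (fun k => φ (y k) - φk k (y k)) Filter.atTop (nhds 0) := by
  obtain ⟨Cg, hCg⟩ := hgbdd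
  have hinner : Filter.Tendsto
      (fun k => (inner ℝ (g k) (y (k + 1) - y k) : ℝ)) Filter.atTop (nhds 0) := by
    apply squeeze_zero_norm (a := fun k => Cg * ‖y (k + 1) - y k‖)
    · intro k
      calc ‖(inner ℝ (g k) (y (k + 1) - y k) : ℝ)‖
          ≤ ‖g k‖ * ‖y (k + 1) - y k‖ := norm_inner_le_norm _ _
        _ ≤ Cg * ‖y (k + 1) - y k‖ :=
            mul_le_mul_of_nonneg_right (hCg k) (norm_nonneg _)
    · have := (hydiff.norm).const_mul Cg
      simpa using this
  have hupper : Filter.Tendsto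
      (fun k => (φk (k + 1) (y (k + 1)) - φk k (y k)) -
        (inner ℝ (g k) (y (k + 1) - y k) : ℝ)) Filter.atTop (nhds 0) := by
    simpa using hval.sub hinner
  refine tendsto_of_tendsto_of_tendsto_of_le_of_le (tendsto_const_nhds : Filter.Tendsto (fun _ : ℕ => (0:ℝ)) Filter.atTop (nhds 0)) hupper
    (fun k => sub_nonneg.2 (hφkle k (y k))) (fun k => ?_)
  have h1 := hsub k (y (k + 1) - y k)
  rw [add_sub_cancel] at h1
  have h2 : φ (y k) - φk k (y k) = φk (k + 1) (y k) - φk k (y k) := by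
    rw [hexact k]
  linarith
end
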